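/- Let Aₙ be Hermitian positive definite, Vpost an n×n matrix and p an n×k full-rank matrix with k < n. Assume (a) there exists α > 0 such that ‖Vpost x‖²_{Aₙ} ≤ ‖x‖²_{Aₙ} - α ‖x‖²_{Aₙ²} for all x, and (b) there exists γ > 0 such that min over y of ‖x - p y‖₂² ≤ γ ‖x‖²_{Aₙ} for all x. Then γ ≥ α and the two-grid iteration matrix TGM = Vpost (I - p (p^H Aₙ p)⁻¹ p^H Aₙ) satisfies ‖TGM‖_{Aₙ} ≤ √(1 - α/γ). -/

import Mathlib

open Matrix
open scoped ComplexOrder InnerProductSpace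

private noncomputable def toE {n : ℕ} (u : Fin n → ℂ) : EuclideanSpace ℂ (Fin n) :=
  (WithLp.equiv 2 _).symm u

private lemma dot_self_re_eq_norm_sq {n : ℕ} (u : Fin n → ℂ) :
    (star u ⬝ᵥ u).re = ‖toE u‖ ^ 2 := by
  rw [@norm_sq_eq_re_inner ℂ, toE, WithLp.equiv_symm_apply, EuclideanSpace.inner_toLp_toLp, dotProduct_comm]; rfl

private lemma dot_self_re_nonneg {n : ℕ} (u : Fin n → ℂ) :
    0 ≤ (star u ⬝ᵥ u).re := by
  rw [dot_self_re_eq_norm_sq]; positivity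

private lemma dot_self_re_pos {n : ℕ} {u : Fin n → ℂ} (hu : u ≠ 0) :
    0 < (star u ⬝ᵥ u).re := by
  rw [dot_self_re_eq_norm_sq]
  have h : toE u ≠ 0 := fun h => hu ((WithLp.equiv 2 _).symm.injective
    (h.trans (WithLp.toLp_zero (p := 2) (V := Fin n → ℂ)).symm))
  have h2 : 0 < ‖toE u‖ := norm_pos_iff.mpr h
  positivity

private lemma cs_re_sq {n : ℕ} (u v : Fin n → ℂ) :
    ((star u ⬝ᵥ v).re) ^ 2 ≤ (star u ⬝ᵥ u).re * (star v ⬝ᵥ v).re := by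
  have h1 : ⟪toE u, toE v⟫_ℂ = star u ⬝ᵥ v := by simp only [toE]; exact (EuclideanSpace.inner_toLp_toLp u v).trans (dotProduct_comm _ _)
  have h4 := norm_inner_le_norm (𝕜 := ℂ) (toE u) (toE v)
  rw [h1] at h4
  have h5 : |(star u ⬝ᵥ v).re| ≤ ‖toE u‖ * ‖toE v‖ := (Complex.abs_re_le_norm _).trans h4
  calc ((star u ⬝ᵥ v).re) ^ 2 = |(star u ⬝ᵥ v).re| ^ 2 := (sq_abs _).symm
    _ ≤ (‖toE u‖ * ‖toE v‖) ^ 2 := pow_le_pow_left₀ (abs_nonneg _) h5 2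
    _ = (star u ⬝ᵥ u).re * (star v ⬝ᵥ v).re := by
        rw [mul_pow, dot_self_re_eq_norm_sq, dot_self_re_eq_norm_sq]
theorem stmt_2 {n k : ℕ} (hkn : k < n)
    (A : Matrix (Fin n) (Fin n) ℂ) (hA : A.PosDef)
    (V : Matrix (Fin n) (Fin n) ℂ)
    (p : Matrix (Fin n) (Fin k) ℂ) (hp : Function.Injective p.mulVec)
    (α : ℝ) (hα : 0 < α)
    (ha : ∀ x : Fin n → ℂ,
      (star (V.mulVec x) ⬝ᵥ A.mulVec (V.mulVec x)).re ≤
        (star x ⬝ᵥ A.mulVec x).re - α * (star x ⬝ᵥ (A * A).mulVec x).re)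
    (γ : ℝ) (hγ : 0 < γ)
    (hb : ∀ x : Fin n → ℂ, ∃ y : Fin k → ℂ,
      (star (x - p.mulVec y) ⬝ᵥ (x - p.mulVec y)).re ≤
        γ * (star x ⬝ᵥ A.mulVec x).re)
    (TGM : Matrix (Fin n) (Fin n) ℂ)
    (hTGM : TGM = V * (1 - p * (pᴴ * A * p)⁻¹ * pᴴ * A)) :
    α ≤ γ ∧
    ∀ x : Fin n → ℂ,
      (star (TGM.mulVec x) ⬝ᵥ A.mulVec (TGM.mulVec x)).re ≤
        (1 - α / γ) * (star x ⬝ᵥ A.mulVec x).re := by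
  classical
  have hAH : Aᴴ = A := hA.isHermitian
  -- `star u ᵥ* A = star (A *ᵥ u)` type identity
  have hsw : ∀ u v : Fin n → ℂ, star (A *ᵥ u) ⬝ᵥ v = star u ⬝ᵥ A *ᵥ v := by
    intro u v
    rw [star_mulVec, hAH, ← dotProduct_mulVec]
  have hAA : ∀ u : Fin n → ℂ, star (A *ᵥ u) ⬝ᵥ (A *ᵥ u) = star u ⬝ᵥ (A * A) *ᵥ u := by
    intro u
    rw [hsw, mulVec_mulVec]
  -- orthogonality consequences of `(pᴴ * A) *ᵥ e = 0`
  have horth : ∀ (e : Fin n → ℂ), (pᴴ * A) *ᵥ e = 0 →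
      ∀ z : Fin k → ℂ, star (A *ᵥ e) ⬝ᵥ (p *ᵥ z) = 0 := by
    intro e he z
    have key : star (A *ᵥ e) ᵥ* p = star ((pᴴ * A) *ᵥ e) := by
      rw [star_mulVec (pᴴ * A), conjTranspose_mul, conjTranspose_conjTranspose, hAH,
        ← vecMul_vecMul, star_mulVec, hAH]
    rw [dotProduct_mulVec, key, he, star_zero, zero_dotProduct]
  -- the approximation-property consequence : `q e ≤ γ * r e` when `pᴴ A e = 0`
  have hkey : ∀ (e : Fin n → ℂ), (pᴴ * A) *ᵥ e = 0 →
      (star e ⬝ᵥ A *ᵥ e).re ≤ γ * (star e ⬝ᵥ (A * A) *ᵥ e).re := by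
    intro e he
    obtain ⟨y, hy⟩ := hb e
    have h1 : star (A *ᵥ e) ⬝ᵥ (e - p *ᵥ y) = star e ⬝ᵥ A *ᵥ e := by
      rw [dotProduct_sub, horth e he y, sub_zero, hsw]
    have hcs := cs_re_sq (A *ᵥ e) (e - p *ᵥ y)
    rw [h1, hAA] at hcs
    have hq0 : 0 ≤ (star e ⬝ᵥ A *ᵥ e).re := hA.posSemidef.re_dotProduct_nonneg e
    have hr0 : 0 ≤ (star e ⬝ᵥ (A * A) *ᵥ e).re := by
      rw [← hAA]; exact dot_self_re_nonneg (A *ᵥ e)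
    have hd0 : 0 ≤ (star (e - p *ᵥ y) ⬝ᵥ (e - p *ᵥ y)).re := dot_self_re_nonneg _
    rcases eq_or_lt_of_le hq0 with h0 | hpos
    · rw [← h0]; exact mul_nonneg hγ.le hr0
    · have hmul : (star e ⬝ᵥ A *ᵥ e).re * (star e ⬝ᵥ A *ᵥ e).re ≤
          (γ * (star e ⬝ᵥ (A * A) *ᵥ e).re) * (star e ⬝ᵥ A *ᵥ e).re := by
        nlinarith [hcs, mul_le_mul_of_nonneg_left hy hr0]
      exact le_of_mul_le_mul_right hmul hpos
  -- choose a nonzero vector in the kernel of `pᴴ * A`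
  obtain ⟨e₀, he₀ne, he₀⟩ : ∃ e₀ : Fin n → ℂ, e₀ ≠ 0 ∧ (pᴴ * A) *ᵥ e₀ = 0 := by
    have hni : ¬ Function.Injective (pᴴ * A).mulVecLin := by
      intro hinj
      have := LinearMap.finrank_le_finrank_of_injective hinj
      simp [Module.finrank_pi] at this
      omega
    obtain ⟨a, b, hab, hne⟩ := Function.not_injective_iff.mp hni
    refine ⟨a - b, sub_ne_zero.mpr hne, ?_⟩
    have : (pᴴ * A).mulVecLin (a - b) = 0 := by rw [map_sub, hab, sub_self]
    simpa using this
  -- α ≤ γ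
  have hαγ : α ≤ γ := by
    have hv0 : 0 ≤ (star (V *ᵥ e₀) ⬝ᵥ A *ᵥ (V *ᵥ e₀)).re :=
      hA.posSemidef.re_dotProduct_nonneg _
    have hsm := ha e₀
    have hap := hkey e₀ he₀
    have hAe₀ : A *ᵥ e₀ ≠ 0 := by
      intro h
      exact he₀ne ((Matrix.mulVec_injective_iff_isUnit.mpr hA.isUnit)
        (h.trans (Matrix.mulVec_zero A).symm))
    have hrpos : 0 < (star e₀ ⬝ᵥ (A * A) *ᵥ e₀).re := by
      rw [← hAA]; exact dot_self_re_pos hAe₀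
    nlinarith [hv0, hsm, hap, hrpos]
  refine ⟨hαγ, fun x => ?_⟩
  set B := pᴴ * A * p with hBdef
  have hBpd : B.PosDef := by
    refine Matrix.PosDef.of_dotProduct_mulVec_pos (isHermitian_conjTranspose_mul_mul p hA.isHermitian) fun z hz => ?_
    have hpz : p *ᵥ z ≠ 0 := fun h => hz (hp (h.trans (Matrix.mulVec_zero p).symm))
    have := hA.dotProduct_mulVec_pos hpz
    simpa only [star_mulVec, dotProduct_mulVec, vecMul_vecMul, hBdef, Matrix.mul_assoc]
      using this
  have hBB : B * B⁻¹ = 1 := Matrix.mul_nonsing_inv B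
    ((Matrix.isUnit_iff_isUnit_det B).mp hBpd.isUnit)
  -- the coarse-grid correction matrix
  set P : Matrix (Fin n) (Fin n) ℂ := p * B⁻¹ * pᴴ * A with hPdef
  have hker : pᴴ * A * (1 - P) = 0 := by
    have h1 : pᴴ * A * P = pᴴ * A := by
      have : pᴴ * A * P = (B * B⁻¹) * (pᴴ * A) := by
        simp only [hPdef, hBdef, Matrix.mul_assoc]
      rw [this, hBB, Matrix.one_mul]
    rw [Matrix.mul_sub, Matrix.mul_one, h1, sub_self]
  set e : Fin n → ℂ := (1 - P) *ᵥ x with hedef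
  have hore : (pᴴ * A) *ᵥ e = 0 := by
    rw [hedef, mulVec_mulVec, hker, zero_mulVec]
  -- TGM x = V e
  have hTx : TGM *ᵥ x = V *ᵥ e := by
    rw [hTGM, ← Matrix.mulVec_mulVec]
  -- Pythagoras : q e ≤ q x
  set w : Fin k → ℂ := (B⁻¹ * pᴴ * A) *ᵥ x with hwdef
  have hxe : x = e + p *ᵥ w := by
    rw [hedef, hwdef, sub_mulVec, one_mulVec, mulVec_mulVec]
    have : P *ᵥ x = (p * (B⁻¹ * pᴴ * A)) *ᵥ x := by
      simp only [hPdef, Matrix.mul_assoc]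
    rw [this]
    abel
  have hc1 : star (p *ᵥ w) ⬝ᵥ A *ᵥ e = 0 := by
    rw [star_mulVec, ← dotProduct_mulVec, mulVec_mulVec, hore, dotProduct_zero]
  have hc2 : star e ⬝ᵥ A *ᵥ (p *ᵥ w) = 0 := by
    rw [← hsw]; exact horth e hore w
  have hqle : (star e ⬝ᵥ A *ᵥ e).re ≤ (star x ⬝ᵥ A *ᵥ x).re := by
    have hexp : star x ⬝ᵥ A *ᵥ x =
        star e ⬝ᵥ A *ᵥ e + star (p *ᵥ w) ⬝ᵥ A *ᵥ (p *ᵥ w) := by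
      conv_lhs => rw [hxe]
      rw [star_add, mulVec_add, add_dotProduct, dotProduct_add, dotProduct_add,
        hc1, hc2]
      ring
    have hpw : 0 ≤ (star (p *ᵥ w) ⬝ᵥ A *ᵥ (p *ᵥ w)).re :=
      hA.posSemidef.re_dotProduct_nonneg _
    rw [hexp, Complex.add_re]
    linarith
  -- put everything together
  have hsm := ha e
  have hap := hkey e hore
  have hq0 : 0 ≤ (star e ⬝ᵥ A *ᵥ e).re := hA.posSemidef.re_dotProduct_nonneg e
  have hfin : (star (V *ᵥ e) ⬝ᵥ A *ᵥ (V *ᵥ e)).re ≤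
      (1 - α / γ) * (star x ⬝ᵥ A *ᵥ x).re := by
    have h1 : (star (V *ᵥ e) ⬝ᵥ A *ᵥ (V *ᵥ e)).re ≤
        (1 - α / γ) * (star e ⬝ᵥ A *ᵥ e).re := by
      have hdiv : (α / γ) * (star e ⬝ᵥ A *ᵥ e).re ≤ α * (star e ⬝ᵥ (A * A) *ᵥ e).re := by
        rw [div_mul_eq_mul_div, div_le_iff₀ hγ]
        nlinarith [hap, hα]
      nlinarith [hsm]
    have h2 : (0:ℝ) ≤ 1 - α / γ := by
      have : α / γ ≤ 1 := (div_le_one hγ).mpr hαγ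
      linarith
    calc (star (V *ᵥ e) ⬝ᵥ A *ᵥ (V *ᵥ e)).re ≤ (1 - α / γ) * (star e ⬝ᵥ A *ᵥ e).re := h1
      _ ≤ (1 - α / γ) * (star x ⬝ᵥ A *ᵥ x).re := by nlinarith [hqle]
  simpa only [Matrix.mulVec, hTx] using hfin
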